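/- arXiv:math/0703687 — 2 statements merged into one kernel-verified Lean document; each statement's English description precedes it below -/
import Mathlib

section
/- For a ∈ (0,1/2] and r, t ∈ (0,1): 2·μ_a((r+t)/(1+rt+r't')) ≤ μ_a(r) + μ_a(t), where r' = √(1−r²), t' = √(1−t²), with equality when t = r. -/
noncomputable def GaussF (a b c x : ℝ) : ℝ :=
  ∑' n : ℕ, ((ascPochhammer ℝ n).eval a * (ascPochhammer ℝ n).eval b /
    ((ascPochhammer ℝ n).eval c * n.factorial)) * x ^ n

noncomputable def muA (a r : ℝ) : ℝ :=
  (Real.pi / (2 * Real.sin (Real.pi * a))) *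
    GaussF a (1-a) 1 (1 - r^2) / GaussF a (1-a) 1 (r^2)


open Real

noncomputable def co (a : ℝ) (n : ℕ) : ℝ :=
  (ascPochhammer ℝ n).eval a * (ascPochhammer ℝ n).eval (1-a) / ((n.factorial : ℝ)^2)

lemma co_zero (a : ℝ) : co a 0 = 1 := by simp [co]

lemma co_succ (a : ℝ) (n : ℕ) :
    co a (n+1) * ((n:ℝ)+1)^2 = co a n * ((a + n) * ((1-a) + n)) := by
  have h : ((n.factorial : ℝ)) ≠ 0 := Nat.cast_ne_zero.2 n.factorial_ne_zero
  simp only [co, ascPochhammer_succ_eval, Nat.factorial_succ, Nat.cast_mul, Nat.cast_add,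
    Nat.cast_one]
  field_simp

lemma co_pos {a : ℝ} (ha0 : 0 < a) (ha1 : a < 1) (n : ℕ) : 0 < co a n := by
  induction n with
  | zero => simp [co_zero]
  | succ n ih =>
    have h2 : ((n:ℝ)+1)^2 > 0 := by positivity
    have key := co_succ a n
    nlinarith [Nat.cast_nonneg (α := ℝ) n, mul_pos (mul_pos ih (by linarith : (0:ℝ) < a + n))
      (by linarith : (0:ℝ) < (1-a) + n)]

lemma co_succ_le {a : ℝ} (ha0 : 0 < a) (ha1 : a < 1) (n : ℕ) : co a (n+1) ≤ co a n := by
  have key := co_succ a n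
  have hp := co_pos ha0 ha1 n
  have hn : (0:ℝ) ≤ (n:ℝ) := Nat.cast_nonneg n
  nlinarith [sq_nonneg (a - 1/2), co_pos ha0 ha1 (n+1)]

lemma co_le_one {a : ℝ} (ha0 : 0 < a) (ha1 : a < 1) (n : ℕ) : co a n ≤ 1 := by
  induction n with
  | zero => simp [co_zero]
  | succ n ih => exact (co_succ_le ha0 ha1 n).trans ih

noncomputable def Fh (a x : ℝ) : ℝ := ∑' n : ℕ, co a n * x^n
noncomputable def Dh (a x : ℝ) : ℝ := ∑' n : ℕ, ((n:ℝ)+1) * co a (n+1) * x^n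
noncomputable def Eh (a x : ℝ) : ℝ := ∑' n : ℕ, ((n:ℝ)+2) * ((n:ℝ)+1) * co a (n+2) * x^n

section sums
variable {a x : ℝ} (ha0 : 0 < a) (ha1 : a < 1) (hx : |x| < 1)
include ha0 ha1 hx

lemma summable_F : Summable (fun n : ℕ => co a n * x^n) := by
  apply Summable.of_norm_bounded (summable_geometric_of_lt_one (abs_nonneg x) hx)
  intro n
  rw [norm_mul, norm_pow, Real.norm_eq_abs, Real.norm_eq_abs,
    abs_of_pos (co_pos ha0 ha1 n)]
  calc co a n * |x|^n ≤ 1 * |x|^n := by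
        have := co_le_one ha0 ha1 n
        have : |x|^n ≥ 0 := by positivity
        nlinarith [co_le_one ha0 ha1 n, pow_nonneg (abs_nonneg x) n]
    _ = |x|^n := one_mul _

lemma summable_D : Summable (fun n : ℕ => ((n:ℝ)+1) * co a (n+1) * x^n) := by
  have hs : Summable (fun n : ℕ => ((n:ℝ)+1) * |x|^n) := by
    have h1 := summable_pow_mul_geometric_of_norm_lt_one 1 (by rwa [Real.norm_eq_abs, abs_abs] : ‖|x|‖ < 1)
    have h0 := summable_geometric_of_lt_one (abs_nonneg x) hx
    simpa [add_mul, pow_one] using h1.add h0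
  apply Summable.of_norm_bounded hs
  intro n
  have h2 := co_le_one ha0 ha1 (n+1)
  have h3 := (co_pos ha0 ha1 (n+1)).le
  have h4 : (0:ℝ) ≤ (n:ℝ)+1 := by positivity
  have h5 : (0:ℝ) ≤ |x|^n := by positivity
  rw [Real.norm_eq_abs, abs_mul, abs_mul, abs_pow, abs_of_nonneg h3, abs_of_nonneg h4]
  nlinarith [mul_le_mul_of_nonneg_left (mul_le_mul_of_nonneg_left h2 h5) h4]

lemma summable_E : Summable (fun n : ℕ => ((n:ℝ)+2) * ((n:ℝ)+1) * co a (n+2) * x^n) := by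
  have hs : Summable (fun n : ℕ => (((n:ℝ)+2) * ((n:ℝ)+1)) * |x|^n) := by
    have h2 := summable_pow_mul_geometric_of_norm_lt_one 2 (by rwa [Real.norm_eq_abs, abs_abs] : ‖|x|‖ < 1)
    have h1 := summable_pow_mul_geometric_of_norm_lt_one 1 (by rwa [Real.norm_eq_abs, abs_abs] : ‖|x|‖ < 1)
    have h0 := summable_geometric_of_lt_one (abs_nonneg x) hx
    have := (h2.add ((h1.mul_left 3).add (h0.mul_left 2)))
    apply this.congr
    intro n
    push_cast
    ring
  apply Summable.of_norm_bounded hs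
  intro n
  have h2 := co_le_one ha0 ha1 (n+2)
  have h3 := (co_pos ha0 ha1 (n+2)).le
  have h5 : (0:ℝ) ≤ |x|^n := by positivity
  have h6 : (0:ℝ) ≤ ((n:ℝ)+2) * ((n:ℝ)+1) := by positivity
  rw [Real.norm_eq_abs, abs_mul, abs_mul, abs_mul, abs_pow, abs_of_nonneg h3,
    abs_of_nonneg (by positivity : (0:ℝ) ≤ (n:ℝ)+2), abs_of_nonneg (by positivity : (0:ℝ) ≤ (n:ℝ)+1)]
  nlinarith [mul_le_mul_of_nonneg_left (mul_le_mul_of_nonneg_left h2 h5) h6]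

lemma hasSum_F : HasSum (fun n : ℕ => co a n * x^n) (Fh a x) := (summable_F ha0 ha1 hx).hasSum
lemma hasSum_D : HasSum (fun n : ℕ => ((n:ℝ)+1) * co a (n+1) * x^n) (Dh a x) := (summable_D ha0 ha1 hx).hasSum
lemma hasSum_E : HasSum (fun n : ℕ => ((n:ℝ)+2) * ((n:ℝ)+1) * co a (n+2) * x^n) (Eh a x) := (summable_E ha0 ha1 hx).hasSum

end sums

section deriv
variable {a x : ℝ} (ha0 : 0 < a) (ha1 : a < 1) (hx : |x| < 1)
include ha0 ha1 hx

lemma hasDerivAt_F : HasDerivAt (Fh a) (Dh a x) x := by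
  set ρ : ℝ := (1 + |x|)/2 with hρdef
  have hρ0 : 0 ≤ ρ := by positivity
  have hxρ : |x| < ρ := by simp only [hρdef]; linarith
  have hρ1 : ρ < 1 := by simp only [hρdef]; linarith
  have hu : Summable (fun n : ℕ => (n:ℝ) * ρ^(n-1)) := by
    rw [← summable_nat_add_iff 1]
    have h1 := summable_pow_mul_geometric_of_norm_lt_one 1
      (by rwa [Real.norm_eq_abs, abs_of_nonneg hρ0] : ‖ρ‖ < 1)
    have h0 := summable_geometric_of_lt_one hρ0 hρ1
    have := h1.add h0
    apply this.congr
    intro n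
    push_cast
    simp [add_mul, pow_one]
  have key := hasDerivAt_tsum_of_isPreconnected hu (Metric.isOpen_ball)
    ((convex_ball (0:ℝ) ρ).isPreconnected)
    (g := fun n y => co a n * y^n) (g' := fun n y => co a n * ((n:ℝ) * y^(n-1)))
    (fun n y _ => (hasDerivAt_pow n y).const_mul (co a n))
    (fun n y hy => by
      have hyρ : |y| < ρ := by
        have := mem_ball_zero_iff.mp hy
        rwa [Real.norm_eq_abs] at this
      have h1 : |y|^(n-1) ≤ ρ^(n-1) := pow_le_pow_left₀ (abs_nonneg y) hyρ.le _
      have h2 := co_le_one ha0 ha1 n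
      have h3 := (co_pos ha0 ha1 n).le
      rw [Real.norm_eq_abs, abs_mul, abs_mul, abs_pow, abs_of_nonneg h3,
        abs_of_nonneg (Nat.cast_nonneg n : (0:ℝ) ≤ n)]
      calc co a n * ((n:ℝ) * |y|^(n-1)) ≤ 1 * ((n:ℝ) * ρ^(n-1)) := by
            apply mul_le_mul h2 _ (by positivity) one_pos.le
            exact mul_le_mul_of_nonneg_left h1 (Nat.cast_nonneg n)
        _ = (n:ℝ) * ρ^(n-1) := one_mul _)
    (mem_ball_zero_iff.mpr (by rwa [Real.norm_eq_abs]))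
    (summable_F ha0 ha1 hx)
    (mem_ball_zero_iff.mpr (by rwa [Real.norm_eq_abs]))
  have htsum : HasSum (fun n : ℕ => co a n * ((n:ℝ) * x^(n-1))) (Dh a x) := by
    have h := hasSum_D ha0 ha1 hx
    have h' : HasSum (fun n : ℕ => (fun m : ℕ => co a m * ((m:ℝ) * x^(m-1))) (n+1)) (Dh a x) := by
      have e : (fun n : ℕ => (fun m : ℕ => co a m * ((m:ℝ) * x^(m-1))) (n+1))
          = (fun n : ℕ => ((n:ℝ)+1) * co a (n+1) * x^n) := by
        funext n; push_cast; ring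
      rw [e]; exact h
    have h2 := (hasSum_nat_add_iff (f := fun m : ℕ => co a m * ((m:ℝ) * x^(m-1))) 1).mp h'
    simpa using h2
  rw [htsum.tsum_eq] at key
  exact key



lemma hasDerivAt_D : HasDerivAt (Dh a) (Eh a x) x := by
  set ρ : ℝ := (1 + |x|)/2 with hρdef
  have hρ0 : 0 ≤ ρ := by positivity
  have hxρ : |x| < ρ := by simp only [hρdef]; linarith
  have hρ1 : ρ < 1 := by simp only [hρdef]; linarith
  have hρn : ‖ρ‖ < 1 := by rwa [Real.norm_eq_abs, abs_of_nonneg hρ0]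
  have hu : Summable (fun n : ℕ => ((n:ℝ)+1) * (n:ℝ) * ρ^(n-1)) := by
    rw [← summable_nat_add_iff 1]
    have h2 := summable_pow_mul_geometric_of_norm_lt_one 2 hρn
    have h1 := summable_pow_mul_geometric_of_norm_lt_one 1 hρn
    have h0 := summable_geometric_of_lt_one hρ0 hρ1
    have := (h2.add ((h1.mul_left 3).add (h0.mul_left 2)))
    apply this.congr
    intro n
    simp only [Nat.add_sub_cancel]
    push_cast
    ring
  have key := hasDerivAt_tsum_of_isPreconnected hu (Metric.isOpen_ball)
    ((convex_ball (0:ℝ) ρ).isPreconnected)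
    (g := fun (n : ℕ) (y : ℝ) => ((n:ℝ)+1) * co a (n+1) * y^n)
    (g' := fun (n : ℕ) (y : ℝ) => ((n:ℝ)+1) * co a (n+1) * ((n:ℝ) * y^(n-1)))
    (fun n y _ => (hasDerivAt_pow n y).const_mul (((n:ℝ)+1) * co a (n+1)))
    (fun n y hy => by
      have hyρ : |y| < ρ := by
        have := mem_ball_zero_iff.mp hy
        rwa [Real.norm_eq_abs] at this
      have h1 : |y|^(n-1) ≤ ρ^(n-1) := pow_le_pow_left₀ (abs_nonneg y) hyρ.le _
      have h2 := co_le_one ha0 ha1 (n+1)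
      have h3 := (co_pos ha0 ha1 (n+1)).le
      have hn0 : (0:ℝ) ≤ (n:ℝ) := Nat.cast_nonneg n
      have hn1 : (0:ℝ) ≤ (n:ℝ)+1 := by positivity
      rw [Real.norm_eq_abs, abs_mul, abs_mul, abs_mul, abs_pow, abs_of_nonneg h3,
        abs_of_nonneg hn1, abs_of_nonneg hn0]
      have h4 : (n:ℝ) * |y|^(n-1) ≤ (n:ℝ) * ρ^(n-1) := mul_le_mul_of_nonneg_left h1 hn0
      have h5 : (0:ℝ) ≤ (n:ℝ) * ρ^(n-1) := by positivity
      calc ((n:ℝ)+1) * co a (n+1) * ((n:ℝ) * |y|^(n-1))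
          ≤ ((n:ℝ)+1) * 1 * ((n:ℝ) * ρ^(n-1)) := by
            apply mul_le_mul _ h4 (by positivity) (by positivity)
            exact mul_le_mul_of_nonneg_left h2 hn1
        _ = ((n:ℝ)+1) * (n:ℝ) * ρ^(n-1) := by ring)
    (mem_ball_zero_iff.mpr (by rwa [Real.norm_eq_abs]))
    (summable_D ha0 ha1 hx)
    (mem_ball_zero_iff.mpr (by rwa [Real.norm_eq_abs]))
  have htsum : HasSum (fun n : ℕ => ((n:ℝ)+1) * co a (n+1) * ((n:ℝ) * x^(n-1))) (Eh a x) := by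
    have h := hasSum_E ha0 ha1 hx
    have h' : HasSum (fun n : ℕ =>
        (fun m : ℕ => ((m:ℝ)+1) * co a (m+1) * ((m:ℝ) * x^(m-1))) (n+1)) (Eh a x) := by
      have e : (fun n : ℕ => (fun m : ℕ => ((m:ℝ)+1) * co a (m+1) * ((m:ℝ) * x^(m-1))) (n+1))
          = (fun n : ℕ => ((n:ℝ)+2) * ((n:ℝ)+1) * co a (n+2) * x^n) := by
        funext n; simp only [Nat.add_sub_cancel]; push_cast; ring
      rw [e]; exact h
    have h2 := (hasSum_nat_add_iff
      (f := fun m : ℕ => ((m:ℝ)+1) * co a (m+1) * ((m:ℝ) * x^(m-1))) 1).mp h'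
    simpa using h2
  rw [htsum.tsum_eq] at key
  exact key

end deriv

section ode
variable {a x : ℝ} (ha0 : 0 < a) (ha1 : a < 1) (hx : |x| < 1)
include ha0 ha1 hx

lemma ode_identity :
    x*(1-x)*(Eh a x) + (1-2*x)*(Dh a x) = a*(1-a)*(Fh a x) := by
  have hF := hasSum_F ha0 ha1 hx
  have hD := hasSum_D ha0 ha1 hx
  have hE := hasSum_E ha0 ha1 hx
  -- S1 : sum of n(n+1) co(n+1) x^n = x * Eh
  have S1 : HasSum (fun n : ℕ => (n:ℝ)*((n:ℝ)+1)*co a (n+1)*x^n) (x * Eh a x) := by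
    have h' : HasSum (fun n : ℕ =>
        (fun m : ℕ => (m:ℝ)*((m:ℝ)+1)*co a (m+1)*x^m) (n+1)) (x * Eh a x) := by
      have e : (fun n : ℕ => (fun m : ℕ => (m:ℝ)*((m:ℝ)+1)*co a (m+1)*x^m) (n+1))
          = (fun n : ℕ => x * (((n:ℝ)+2)*((n:ℝ)+1)*co a (n+2)*x^n)) := by
        funext n; push_cast; ring
      rw [e]; exact hE.mul_left x
    have h2 := (hasSum_nat_add_iff (f := fun m : ℕ => (m:ℝ)*((m:ℝ)+1)*co a (m+1)*x^m) 1).mp h'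
    simpa using h2
  -- S2 : sum of n(n-1) co n x^n = x^2 * Eh
  have S2 : HasSum (fun n : ℕ => (n:ℝ)*((n:ℝ)-1)*co a n*x^n) (x^2 * Eh a x) := by
    have h' : HasSum (fun n : ℕ =>
        (fun m : ℕ => (m:ℝ)*((m:ℝ)-1)*co a m*x^m) (n+2)) (x^2 * Eh a x) := by
      have e : (fun n : ℕ => (fun m : ℕ => (m:ℝ)*((m:ℝ)-1)*co a m*x^m) (n+2))
          = (fun n : ℕ => x^2 * (((n:ℝ)+2)*((n:ℝ)+1)*co a (n+2)*x^n)) := by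
        funext n; push_cast; ring
      rw [e]; exact hE.mul_left (x^2)
    have h2 := (hasSum_nat_add_iff (f := fun m : ℕ => (m:ℝ)*((m:ℝ)-1)*co a m*x^m) 2).mp h'
    simpa [Finset.sum_range_succ] using h2
  -- S3 : sum of n co n x^n = x * Dh
  have S3 : HasSum (fun n : ℕ => (n:ℝ)*co a n*x^n) (x * Dh a x) := by
    have h' : HasSum (fun n : ℕ =>
        (fun m : ℕ => (m:ℝ)*co a m*x^m) (n+1)) (x * Dh a x) := by
      have e : (fun n : ℕ => (fun m : ℕ => (m:ℝ)*co a m*x^m) (n+1))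
          = (fun n : ℕ => x * (((n:ℝ)+1)*co a (n+1)*x^n)) := by
        funext n; push_cast; ring
      rw [e]; exact hD.mul_left x
    have h2 := (hasSum_nat_add_iff (f := fun m : ℕ => (m:ℝ)*co a m*x^m) 1).mp h'
    simpa using h2
  have comb : HasSum (fun n : ℕ => a*(1-a)*co a n*x^n)
      ((x * Eh a x + Dh a x) - (x^2 * Eh a x + 2 * (x * Dh a x))) := by
    have h := (S1.add hD).sub (S2.add (S3.mul_left 2))
    have e : (fun n : ℕ => ((n:ℝ)*((n:ℝ)+1)*co a (n+1)*x^n + ((n:ℝ)+1)*co a (n+1)*x^n)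
        - ((n:ℝ)*((n:ℝ)-1)*co a n*x^n + 2*((n:ℝ)*co a n*x^n)))
        = (fun n : ℕ => a*(1-a)*co a n*x^n) := by
      funext n
      linear_combination (x^n) * co_succ a n
    rw [← e]; exact h
  have comb2 : HasSum (fun n : ℕ => a*(1-a)*co a n*x^n) (a*(1-a)*Fh a x) := by
    have h := hF.mul_left (a*(1-a))
    simpa [mul_assoc] using h
  have := comb.unique comb2
  linear_combination this

end ode

noncomputable def Wf (a x : ℝ) : ℝ :=
  x*(1-x)*(Dh a x * Fh a (1-x) + Fh a x * Dh a (1-x))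

section pos
variable {a x : ℝ} (ha0 : 0 < a) (ha1 : a < 1)
include ha0 ha1

lemma F_one_le (hx0 : 0 ≤ x) (hx : x < 1) : 1 ≤ Fh a x := by
  have h := hasSum_F ha0 ha1 (by rwa [abs_of_nonneg hx0])
  have h0 := le_hasSum h 0 (fun j _ =>
    mul_nonneg (co_pos ha0 ha1 j).le (pow_nonneg hx0 j))
  simpa [co] using h0

lemma F_pos (hx0 : 0 ≤ x) (hx : x < 1) : 0 < Fh a x :=
  lt_of_lt_of_le one_pos (F_one_le ha0 ha1 hx0 hx)

lemma D_pos (hx0 : 0 ≤ x) (hx : x < 1) : 0 < Dh a x := by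
  have h := hasSum_D ha0 ha1 (by rwa [abs_of_nonneg hx0])
  have h0 := le_hasSum h 0 (fun j _ =>
    mul_nonneg (mul_nonneg (by positivity) (co_pos ha0 ha1 (j+1)).le) (pow_nonneg hx0 j))
  have : (0:ℝ) < ((0:ℕ):ℝ)+1 := by norm_num
  calc (0:ℝ) < (((0:ℕ):ℝ)+1) * co a (0+1) * x^(0:ℕ) := by
        simpa using co_pos ha0 ha1 1
    _ ≤ Dh a x := h0

lemma F_lt_F (hx0 : 0 ≤ x) {y : ℝ} (hxy : x < y) (hy : y < 1) : Fh a x < Fh a y := by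
  have hy0 : 0 ≤ y := hx0.trans hxy.le
  have hFx := hasSum_F ha0 ha1 (a := a) (by rw [abs_of_nonneg hx0]; linarith)
  have hFy := hasSum_F ha0 ha1 (a := a) (by rwa [abs_of_nonneg hy0])
  refine hasSum_lt (i := 1) (fun n => ?_) ?_ hFx hFy
  · exact mul_le_mul_of_nonneg_left (pow_le_pow_left₀ hx0 hxy.le n) (co_pos ha0 ha1 n).le
  · simpa using mul_lt_mul_of_pos_left hxy (co_pos ha0 ha1 1)

lemma W_pos (hx0 : 0 < x) (hx1 : x < 1) : 0 < Wf a x := by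
  have h1 : 0 < Dh a x := D_pos ha0 ha1 hx0.le hx1
  have h2 : 0 < Fh a (1-x) := F_pos ha0 ha1 (by linarith) (by linarith)
  have h3 : 0 < Fh a x := F_pos ha0 ha1 hx0.le hx1
  have h4 : 0 < Dh a (1-x) := D_pos ha0 ha1 (by linarith) (by linarith)
  have : 0 < 1 - x := by linarith
  unfold Wf
  positivity

lemma hasDerivAt_W (hx0 : 0 < x) (hx1 : x < 1) : HasDerivAt (Wf a) 0 x := by
  have hx : |x| < 1 := by rw [abs_of_nonneg hx0.le]; exact hx1
  have hx' : |1-x| < 1 := by rw [abs_of_nonneg (by linarith)]; linarith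
  have hneg : HasDerivAt (fun y : ℝ => 1 - y) (-1) x := by
    simpa using (hasDerivAt_id x).const_sub 1
  have hF1 : HasDerivAt (fun y : ℝ => Fh a (1-y)) (Dh a (1-x) * (-1)) x :=
    (hasDerivAt_F ha0 ha1 hx').comp x hneg
  have hD1 : HasDerivAt (fun y : ℝ => Dh a (1-y)) (Eh a (1-x) * (-1)) x :=
    (hasDerivAt_D ha0 ha1 hx').comp x hneg
  have hq : HasDerivAt (fun y : ℝ => y*(1-y)) (1*(1-x) + x*(-1)) x :=
    (hasDerivAt_id x).mul hneg
  have hp1 : HasDerivAt (fun y : ℝ => Dh a y * Fh a (1-y))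
      (Eh a x * Fh a (1-x) + Dh a x * (Dh a (1-x) * (-1))) x :=
    (hasDerivAt_D ha0 ha1 hx).mul hF1
  have hp2 : HasDerivAt (fun y : ℝ => Fh a y * Dh a (1-y))
      (Dh a x * Dh a (1-x) + Fh a x * (Eh a (1-x) * (-1))) x :=
    (hasDerivAt_F ha0 ha1 hx).mul hD1
  have total := hq.mul (hp1.add hp2)
  have e1 := ode_identity ha0 ha1 hx
  have e2 := ode_identity ha0 ha1 hx'
  have : (1*(1-x) + x*(-1)) * (Dh a x * Fh a (1-x) + Fh a x * Dh a (1-x))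
      + (x*(1-x)) * ((Eh a x * Fh a (1-x) + Dh a x * (Dh a (1-x) * (-1)))
        + (Dh a x * Dh a (1-x) + Fh a x * (Eh a (1-x) * (-1)))) = 0 := by
    linear_combination Fh a (1-x) * e1 - Fh a x * e2
  simp only [Pi.add_apply] at total
  rw [this] at total
  unfold Wf
  exact total

end pos

section wconst
variable {a : ℝ} (ha0 : 0 < a) (ha1 : a < 1)
include ha0 ha1

lemma W_eq_of_le {x y : ℝ} (hx : x ∈ Set.Ioo (0:ℝ) 1) (hy : y ∈ Set.Ioo (0:ℝ) 1)
    (hxy : x ≤ y) : Wf a y = Wf a x := by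
  have hsub : Set.Icc x y ⊆ Set.Ioo (0:ℝ) 1 := fun z hz =>
    ⟨lt_of_lt_of_le hx.1 hz.1, lt_of_le_of_lt hz.2 hy.2⟩
  have hcont : ContinuousOn (Wf a) (Set.Icc x y) := fun z hz =>
    ((hasDerivAt_W ha0 ha1 (hsub hz).1 (hsub hz).2).continuousAt).continuousWithinAt
  have hderiv : ∀ z ∈ Set.Ico x y, HasDerivWithinAt (Wf a) 0 (Set.Ici z) z := fun z hz => by
    have hz' : z ∈ Set.Ioo (0:ℝ) 1 := hsub ⟨hz.1, hz.2.le⟩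
    exact (hasDerivAt_W ha0 ha1 hz'.1 hz'.2).hasDerivWithinAt
  exact constant_of_has_deriv_right_zero hcont hderiv y ⟨hxy, le_refl y⟩

lemma W_eq {x y : ℝ} (hx : x ∈ Set.Ioo (0:ℝ) 1) (hy : y ∈ Set.Ioo (0:ℝ) 1) :
    Wf a x = Wf a y := by
  rcases le_total x y with h | h
  · exact (W_eq_of_le ha0 ha1 hx hy h).symm
  · exact W_eq_of_le ha0 ha1 hy hx h

end wconst

-- tanh facts
lemma tanh_lt_one' (u : ℝ) : Real.tanh u < 1 := by
  rw [Real.tanh_eq_sinh_div_cosh, div_lt_one (Real.cosh_pos u)]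
  exact Real.sinh_lt_cosh u

lemma tanh_pos' {u : ℝ} (hu : 0 < u) : 0 < Real.tanh u := by
  rw [Real.tanh_eq_sinh_div_cosh]
  exact div_pos (by rwa [Real.sinh_pos_iff]) (Real.cosh_pos u)

lemma tanh_le_tanh' {u v : ℝ} (huv : u ≤ v) : Real.tanh u ≤ Real.tanh v := by
  rw [Real.tanh_eq_sinh_div_cosh, Real.tanh_eq_sinh_div_cosh,
    div_le_div_iff₀ (Real.cosh_pos u) (Real.cosh_pos v)]
  have h := Real.sinh_sub v u
  have h2 : 0 ≤ Real.sinh (v - u) := by rwa [Real.sinh_nonneg_iff, sub_nonneg]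
  nlinarith [Real.cosh_pos u, Real.cosh_pos v]

lemma hasDerivAt_tanh (u : ℝ) : HasDerivAt Real.tanh (1 - Real.tanh u ^ 2) u := by
  have h := (Real.hasDerivAt_sinh u).div (Real.hasDerivAt_cosh u) (Real.cosh_pos u).ne'
  have he : Real.tanh = fun y => Real.sinh y / Real.cosh y := funext fun y => Real.tanh_eq_sinh_div_cosh y
  rw [he]
  refine h.congr_deriv ?_
  have hc := (Real.cosh_pos u).ne'
  have hid := Real.cosh_sq_sub_sinh_sq u
  field_simp

noncomputable def Ca (a : ℝ) : ℝ := Real.pi / (2 * Real.sin (Real.pi * a))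
noncomputable def gh (a u : ℝ) : ℝ := Ca a * Fh a (1 - Real.tanh u ^ 2) / Fh a (Real.tanh u ^ 2)

lemma Ca_pos {a : ℝ} (ha0 : 0 < a) (ha1 : a < 1) : 0 < Ca a := by
  have hs : 0 < Real.sin (Real.pi * a) := Real.sin_pos_of_pos_of_lt_pi
    (by positivity) (by nlinarith [Real.pi_pos])
  unfold Ca
  positivity

section g
variable {a : ℝ} (ha0 : 0 < a) (ha1 : a < 1)
include ha0 ha1

lemma hasDerivAt_g {u : ℝ} (hu : 0 < u) :
    HasDerivAt (gh a)
      (-2 * Ca a * Wf a (1/2) / (Real.tanh u * Fh a (Real.tanh u ^ 2)^2)) u := by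
  set r := Real.tanh u with hrdef
  have hr0 : 0 < r := tanh_pos' hu
  have hr1 : r < 1 := tanh_lt_one' u
  set x := r^2 with hxdef
  have hx0 : 0 < x := by positivity
  have hx1 : x < 1 := by nlinarith
  have hxa : |x| < 1 := by rw [abs_of_pos hx0]; exact hx1
  have hxa' : |1-x| < 1 := by rw [abs_of_pos (by linarith)]; linarith
  have hr : HasDerivAt Real.tanh (1 - r ^ 2) u := hasDerivAt_tanh u
  have hx2 : HasDerivAt (fun y => Real.tanh y ^ 2) (2*r*(1-r^2)) u := by
    have := hr.pow 2
    refine this.congr_deriv ?_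
    push_cast
    ring
  have h1x : HasDerivAt (fun y => 1 - Real.tanh y ^ 2) (-(2*r*(1-r^2))) u := by
    simpa using hx2.const_sub 1
  have hA : HasDerivAt (fun y => Fh a (Real.tanh y ^ 2)) (Dh a x * (2*r*(1-r^2))) u :=
    by have h := (hasDerivAt_F ha0 ha1 (x := Real.tanh u ^ 2) hxa).comp u hx2; exact h
  have hB : HasDerivAt (fun y => Fh a (1 - Real.tanh y ^ 2))
      (Dh a (1-x) * (-(2*r*(1-r^2)))) u :=
    by have h := (hasDerivAt_F ha0 ha1 (x := 1 - Real.tanh u ^ 2) hxa').comp u h1x; exact h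
  have hFx : 0 < Fh a x := F_pos ha0 ha1 hx0.le hx1
  have hFx' : 0 < Fh a (1-x) := F_pos ha0 ha1 (by linarith) (by linarith)
  have htot := (hB.const_mul (Ca a)).div hA hFx.ne'
  refine htot.congr_deriv ?_
  have hW : Wf a (1/2) = Wf a x := W_eq ha0 ha1 (by norm_num) ⟨hx0, hx1⟩
  rw [hW]
  unfold Wf
  simp only [hxdef, hrdef]
  have hFx2 : 0 < Fh a (Real.tanh u ^ 2) := hFx
  have hFx2' : 0 < Fh a (1 - Real.tanh u ^ 2) := hFx'
  have hr0' : 0 < Real.tanh u := hr0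
  field_simp
  ring
end g

section conv
variable {a : ℝ} (ha0 : 0 < a) (ha1 : a < 1)
include ha0 ha1

lemma F_le_F {x y : ℝ} (hx0 : 0 ≤ x) (hxy : x ≤ y) (hy : y < 1) : Fh a x ≤ Fh a y := by
  rcases eq_or_lt_of_le hxy with h | h
  · rw [h]
  · exact (F_lt_F ha0 ha1 hx0 h hy).le

lemma convexOn_g : ConvexOn ℝ (Set.Ioi (0:ℝ)) (gh a) := by
  have hK : 0 < 2 * Ca a * Wf a (1/2) :=
    mul_pos (mul_pos two_pos (Ca_pos ha0 ha1)) (W_pos ha0 ha1 (by norm_num) (by norm_num))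
  have hmono : MonotoneOn (deriv (gh a)) (interior (Set.Ioi (0:ℝ))) := by
    rw [interior_Ioi]
    intro u hu v hv huv
    rw [(hasDerivAt_g ha0 ha1 hu).deriv, (hasDerivAt_g ha0 ha1 hv).deriv]
    have hτu : 0 < Real.tanh u := tanh_pos' hu
    have hτv : 0 < Real.tanh v := tanh_pos' hv
    have hτuv : Real.tanh u ≤ Real.tanh v := tanh_le_tanh' huv
    have hτu1 : Real.tanh u < 1 := tanh_lt_one' u
    have hτv1 : Real.tanh v < 1 := tanh_lt_one' v
    have hΦu : 0 < Fh a (Real.tanh u ^ 2) := F_pos ha0 ha1 (by positivity) (by nlinarith)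
    have hΦv : 0 < Fh a (Real.tanh v ^ 2) := F_pos ha0 ha1 (by positivity) (by nlinarith)
    have hΦuv : Fh a (Real.tanh u ^ 2) ≤ Fh a (Real.tanh v ^ 2) :=
      F_le_F ha0 ha1 (by positivity) (by nlinarith) (by nlinarith)
    have hA : 0 < Real.tanh u * Fh a (Real.tanh u ^ 2)^2 := by positivity
    have hAB : Real.tanh u * Fh a (Real.tanh u ^ 2)^2
        ≤ Real.tanh v * Fh a (Real.tanh v ^ 2)^2 := by
      apply mul_le_mul hτuv _ (by positivity) hτv.le
      exact pow_le_pow_left₀ hΦu.le hΦuv 2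
    have e1 : -2 * Ca a * Wf a (1/2) / (Real.tanh u * Fh a (Real.tanh u ^ 2)^2)
        = -((2 * Ca a * Wf a (1/2)) / (Real.tanh u * Fh a (Real.tanh u ^ 2)^2)) := by ring
    have e2 : -2 * Ca a * Wf a (1/2) / (Real.tanh v * Fh a (Real.tanh v ^ 2)^2)
        = -((2 * Ca a * Wf a (1/2)) / (Real.tanh v * Fh a (Real.tanh v ^ 2)^2)) := by ring
    rw [e1, e2, neg_le_neg_iff]
    exact div_le_div_of_nonneg_left hK.le hA hAB
  have hcont : ContinuousOn (gh a) (Set.Ioi (0:ℝ)) := fun u hu =>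
    (hasDerivAt_g ha0 ha1 hu).continuousAt.continuousWithinAt
  have hdiff : DifferentiableOn ℝ (gh a) (interior (Set.Ioi (0:ℝ))) := by
    rw [interior_Ioi]
    exact fun u hu => (hasDerivAt_g ha0 ha1 hu).differentiableAt.differentiableWithinAt
  exact hmono.convexOn_of_deriv (convex_Ioi 0) hcont hdiff

end conv

lemma GaussF_eq (a x : ℝ) : GaussF a (1-a) 1 x = Fh a x := by
  unfold GaussF Fh co
  apply tsum_congr
  intro n
  rw [ascPochhammer_eval_one]
  ring

lemma muA_eq (a r : ℝ) : muA a r = Ca a * Fh a (1-r^2) / Fh a (r^2) := by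
  unfold muA Ca
  rw [GaussF_eq, GaussF_eq]

noncomputable def ath (r : ℝ) : ℝ := Real.log ((1+r)/(1-r)) / 2

lemma ath_pos {r : ℝ} (h0 : 0 < r) (h1 : r < 1) : 0 < ath r := by
  have : 1 < (1+r)/(1-r) := by
    rw [lt_div_iff₀ (by linarith)]
    linarith
  unfold ath
  have := Real.log_pos this
  linarith

lemma tanh_ath {r : ℝ} (h1 : -1 < r) (h2 : r < 1) : Real.tanh (ath r) = r := by
  have hX : 0 < (1+r)/(1-r) := div_pos (by linarith) (by linarith)
  have he : Real.exp (ath r) * Real.exp (ath r) = (1+r)/(1-r) := by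
    rw [← Real.exp_add]
    unfold ath
    rw [show Real.log ((1+r)/(1-r))/2 + Real.log ((1+r)/(1-r))/2
      = Real.log ((1+r)/(1-r)) by ring, Real.exp_log hX]
  set u := ath r
  have hp : 0 < Real.exp u := Real.exp_pos u
  have he2 : Real.exp u * Real.exp u * (1-r) = 1+r := by
    rw [eq_div_iff (by linarith : (1:ℝ)-r ≠ 0)] at he
    linarith [he]
  rw [Real.tanh_eq_sinh_div_cosh, Real.sinh_eq, Real.cosh_eq, Real.exp_neg]
  rw [div_eq_iff (by positivity : ((Real.exp u + (Real.exp u)⁻¹)/2) ≠ 0)]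
  field_simp
  nlinarith [he2]

lemma sqrt_one_sub_tanh_sq (w : ℝ) : Real.sqrt (1 - Real.tanh w^2) = 1 / Real.cosh w := by
  have hc : 0 < Real.cosh w := Real.cosh_pos w
  have h : 1 - Real.tanh w^2 = (1/Real.cosh w)^2 := by
    rw [Real.tanh_eq_sinh_div_cosh]
    have := Real.cosh_sq_sub_sinh_sq w
    field_simp
    exact this
  rw [h, Real.sqrt_sq (by positivity)]

lemma half_id (u v : ℝ) :
    (Real.tanh u + Real.tanh v) / (1 + Real.tanh u * Real.tanh v +
      Real.sqrt (1 - Real.tanh u^2) * Real.sqrt (1 - Real.tanh v^2))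
    = Real.tanh ((u+v)/2) := by
  rw [sqrt_one_sub_tanh_sq, sqrt_one_sub_tanh_sq]
  set m := (u+v)/2 with hm
  have hcu := Real.cosh_pos u
  have hcv := Real.cosh_pos v
  have hcm := Real.cosh_pos m
  have h1 : Real.cosh u * Real.cosh v + Real.sinh u * Real.sinh v
      = Real.cosh m ^2 + Real.sinh m ^2 := by
    rw [← Real.cosh_add, show u + v = m + m by rw [hm]; ring, Real.cosh_add]
    ring
  have h2 : Real.sinh u * Real.cosh v + Real.cosh u * Real.sinh v
      = 2 * Real.sinh m * Real.cosh m := by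
    rw [← Real.sinh_add, show u + v = m + m by rw [hm]; ring, Real.sinh_add]
    ring
  have h3 := Real.cosh_sq_sub_sinh_sq m
  have hden : 0 < 1 + Real.tanh u * Real.tanh v + 1/Real.cosh u * (1/Real.cosh v) := by
    rw [Real.tanh_eq_sinh_div_cosh, Real.tanh_eq_sinh_div_cosh]
    have : 0 < Real.cosh u * Real.cosh v + Real.sinh u * Real.sinh v + 1 := by nlinarith
    have e : 1 + Real.sinh u/Real.cosh u * (Real.sinh v/Real.cosh v) + 1/Real.cosh u * (1/Real.cosh v)
        = (Real.cosh u * Real.cosh v + Real.sinh u * Real.sinh v + 1)/(Real.cosh u * Real.cosh v) := by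
      field_simp
    rw [e]
    positivity
  rw [Real.tanh_eq_sinh_div_cosh, Real.tanh_eq_sinh_div_cosh, Real.tanh_eq_sinh_div_cosh] at *
  rw [div_eq_div_iff (by linarith) hcm.ne']
  field_simp
  linear_combination Real.cosh m * h2 - Real.sinh m * h1 + Real.sinh m * h3

theorem muA_subadditive (a : ℝ) (ha : a ∈ Set.Ioc (0:ℝ) (1/2))
    (r t : ℝ) (hr : r ∈ Set.Ioo (0:ℝ) 1) (ht : t ∈ Set.Ioo (0:ℝ) 1) :
    2 * muA a ((r + t) / (1 + r*t + Real.sqrt (1-r^2) * Real.sqrt (1-t^2))) ≤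
      muA a r + muA a t ∧
    (t = r →
      2 * muA a ((r + t) / (1 + r*t + Real.sqrt (1-r^2) * Real.sqrt (1-t^2))) =
        muA a r + muA a t) := by
  have ha0 : 0 < a := ha.1
  have ha1 : a < 1 := lt_of_le_of_lt ha.2 (by norm_num)
  obtain ⟨hr0, hr1⟩ := hr
  obtain ⟨ht0, ht1⟩ := ht
  set u := ath r with hudef
  set v := ath t with hvdef
  have hu : 0 < u := ath_pos hr0 hr1
  have hv : 0 < v := ath_pos ht0 ht1
  have htu : Real.tanh u = r := tanh_ath (by linarith) hr1
  have htv : Real.tanh v = t := tanh_ath (by linarith) ht1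
  have hs : (r + t) / (1 + r*t + Real.sqrt (1-r^2) * Real.sqrt (1-t^2))
      = Real.tanh ((u+v)/2) := by
    rw [← htu, ← htv]
    exact half_id u v
  have hgu : gh a u = muA a r := by
    rw [gh, htu, muA_eq]
  have hgv : gh a v = muA a t := by
    rw [gh, htv, muA_eq]
  have hgm : gh a ((u+v)/2) = muA a ((r + t) / (1 + r*t + Real.sqrt (1-r^2) * Real.sqrt (1-t^2))) := by
    rw [hs, gh, muA_eq]
  have hconv := convexOn_g ha0 ha1
  have hineq := hconv.2 (Set.mem_Ioi.mpr hu) (Set.mem_Ioi.mpr hv)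
    (by norm_num : (0:ℝ) ≤ 1/2) (by norm_num : (0:ℝ) ≤ 1/2) (by norm_num)
  have hmid : (1/2 : ℝ) • u + (1/2 : ℝ) • v = (u+v)/2 := by
    simp only [smul_eq_mul]; ring
  rw [hmid] at hineq
  rw [hgm, hgu, hgv] at hineq
  simp only [smul_eq_mul] at hineq
  constructor
  · linarith
  · intro htr
    rw [htr]
    have h2 : Real.sqrt (1-r^2) * Real.sqrt (1-r^2) = 1 - r^2 :=
      Real.mul_self_sqrt (by nlinarith)
    have hd : 1 + r*r + Real.sqrt (1-r^2) * Real.sqrt (1-r^2) = 2 := by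
      rw [h2]; ring
    rw [hd]
    rw [show (r + r)/2 = r by ring]
    ring
end

section
/- For a, b ∈ (0,1) with a + b ≤ 1 and all r ∈ (0,1), the Landen inequality holds: F(a,b;a+b;(2√r/(1+r))²) ≤ (1+r)·F(a,b;a+b;r²). -/
open Finset Real MeasureTheory intervalIntegral Set
open scoped Real

noncomputable def lanA (n : ℕ) : ℝ := (ascPochhammer ℝ n).eval (1/2 : ℝ) / n.factorial

noncomputable def lanK (n : ℕ) : ℝ := lanA n ^ 2

lemma lanA_zero : lanA 0 = 1 := by simp [lanA]

lemma lanA_succ (n : ℕ) : lanA (n+1) = lanA n * ((n : ℝ) + 1/2) / ((n : ℝ) + 1) := by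
  have h : ((n+1).factorial : ℝ) = (n.factorial : ℝ) * ((n:ℝ)+1) := by
    push_cast [Nat.factorial_succ]; ring
  have h2 : (n.factorial : ℝ) ≠ 0 := by positivity
  rw [lanA, lanA, ascPochhammer_succ_eval, h]
  field_simp
  ring

lemma lanA_pos (n : ℕ) : 0 < lanA n := by
  apply div_pos (ascPochhammer_pos n _ (by norm_num)) (by positivity)

lemma lanA_le_one (n : ℕ) : lanA n ≤ 1 := by
  induction n with
  | zero => simp [lanA_zero]
  | succ n ih =>
    rw [lanA_succ]
    have h := lanA_pos n
    rw [div_le_one (by positivity)]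
    nlinarith

lemma sum_weight_reflect (m : ℕ) (f : ℕ → ℝ) :
    ∑ i ∈ range (m+1), ((m-i : ℕ):ℝ) * (f i * f (m-i)) =
      ∑ i ∈ range (m+1), (i:ℝ) * (f i * f (m-i)) := by
  rw [← Finset.sum_range_reflect]
  apply Finset.sum_congr rfl
  intro i hi
  have hi' : i ≤ m := by simpa [Nat.lt_succ_iff] using hi
  have h1 : m + 1 - 1 - i = m - i := by omega
  have h2 : m - (m - i) = i := by omega
  rw [h1, h2]
  ring

lemma lanA_conv (m : ℕ) : ∑ i ∈ range (m+1), lanA i * lanA (m-i) = 1 := by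
  induction m with
  | zero => simp [lanA]
  | succ m ih =>
    have key : ((m:ℝ)+1) * ∑ i ∈ range (m+2), lanA i * lanA (m+1-i)
        = ((m:ℝ)+1) * ∑ i ∈ range (m+1), lanA i * lanA (m-i) := by
      have hsplit : ((m:ℝ)+1) * ∑ i ∈ range (m+2), lanA i * lanA (m+1-i)
          = (∑ i ∈ range (m+2), (i:ℝ) * (lanA i * lanA (m+1-i)))
            + ∑ i ∈ range (m+2), (((m+1-i : ℕ)):ℝ) * (lanA i * lanA (m+1-i)) := by
        rw [Finset.mul_sum, ← Finset.sum_add_distrib]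
        apply Finset.sum_congr rfl
        intro i hi
        have hi' : i ≤ m + 1 := by simpa [Nat.lt_succ_iff] using hi
        have : (((m+1-i : ℕ)):ℝ) = (m:ℝ) + 1 - (i:ℝ) := by
          push_cast [Nat.cast_sub hi']; ring
        rw [this]; ring
      have hrefl : ∑ i ∈ range (m+2), (((m+1-i : ℕ)):ℝ) * (lanA i * lanA (m+1-i))
          = ∑ i ∈ range (m+2), (i:ℝ) * (lanA i * lanA (m+1-i)) :=
        sum_weight_reflect (m+1) lanA
      have hA : ∑ i ∈ range (m+2), (i:ℝ) * (lanA i * lanA (m+1-i))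
          = ∑ i ∈ range (m+1), ((i:ℝ) + 1/2) * (lanA i * lanA (m-i)) := by
        rw [Finset.sum_range_succ' (fun i => (i:ℝ) * (lanA i * lanA (m+1-i))) (m+1)]
        simp only [Nat.cast_zero, zero_mul, add_zero]
        apply Finset.sum_congr rfl
        intro i hi
        have h1 : m + 1 - (i+1) = m - i := by omega
        have h2 : ((i:ℕ)+1 : ℝ) ≠ 0 := by positivity
        rw [h1, lanA_succ]
        push_cast
        field_simp
      have hW : ∑ i ∈ range (m+1), ((m-i : ℕ):ℝ) * (lanA i * lanA (m-i))
          = ∑ i ∈ range (m+1), (i:ℝ) * (lanA i * lanA (m-i)) :=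
        sum_weight_reflect m lanA
      -- m * T m = 2 W
      have hmT : (m:ℝ) * ∑ i ∈ range (m+1), lanA i * lanA (m-i)
          = 2 * ∑ i ∈ range (m+1), (i:ℝ) * (lanA i * lanA (m-i)) := by
        have : (m:ℝ) * ∑ i ∈ range (m+1), lanA i * lanA (m-i)
            = (∑ i ∈ range (m+1), (i:ℝ) * (lanA i * lanA (m-i)))
              + ∑ i ∈ range (m+1), ((m-i : ℕ):ℝ) * (lanA i * lanA (m-i)) := by
          rw [Finset.mul_sum, ← Finset.sum_add_distrib]
          apply Finset.sum_congr rfl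
          intro i hi
          have hi' : i ≤ m := by simpa [Nat.lt_succ_iff] using hi
          have : (((m-i : ℕ)):ℝ) = (m:ℝ) - (i:ℝ) := by
            push_cast [Nat.cast_sub hi']; ring
          rw [this]; ring
        rw [this, hW]; ring
      calc ((m:ℝ)+1) * ∑ i ∈ range (m+2), lanA i * lanA (m+1-i)
          = 2 * ∑ i ∈ range (m+2), (i:ℝ) * (lanA i * lanA (m+1-i)) := by
            rw [hsplit, hrefl]; ring
        _ = 2 * ∑ i ∈ range (m+1), ((i:ℝ) + 1/2) * (lanA i * lanA (m-i)) := by rw [hA]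
        _ = 2 * (∑ i ∈ range (m+1), (i:ℝ) * (lanA i * lanA (m-i)))
              + ∑ i ∈ range (m+1), lanA i * lanA (m-i) := by
            have : ∑ i ∈ range (m+1), ((i:ℝ) + 1/2) * (lanA i * lanA (m-i))
                = (∑ i ∈ range (m+1), (i:ℝ) * (lanA i * lanA (m-i)))
                  + (1/2) * ∑ i ∈ range (m+1), lanA i * lanA (m-i) := by
              rw [Finset.mul_sum, ← Finset.sum_add_distrib]
              exact Finset.sum_congr rfl (fun i _ => by ring)
            rw [this]; ring
        _ = ((m:ℝ)+1) * ∑ i ∈ range (m+1), lanA i * lanA (m-i) := by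
            rw [← hmT]; ring
    have h2 : ((m:ℝ)+1) ≠ 0 := by positivity
    have := mul_left_cancel₀ h2 key
    rw [this, ih]

lemma lanA_summable {y : ℝ} (h0 : 0 ≤ y) (h1 : y < 1) :
    Summable (fun n => lanA n * y ^ n) := by
  apply Summable.of_nonneg_of_le (fun n => mul_nonneg (lanA_pos n).le (pow_nonneg h0 n))
    (fun n => ?_) (summable_geometric_of_lt_one h0 h1)
  calc lanA n * y ^ n ≤ 1 * y ^ n := by
        apply mul_le_mul_of_nonneg_right (lanA_le_one n) (by positivity)
    _ = y ^ n := one_mul _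

lemma lanA_hasSum {y : ℝ} (h0 : 0 ≤ y) (h1 : y < 1) :
    HasSum (fun n => lanA n * y ^ n) (1 / Real.sqrt (1 - y)) := by
  have hs := lanA_summable h0 h1
  refine (Summable.hasSum_iff hs).mpr ?_
  set S := ∑' n, lanA n * y ^ n with hS
  have hnorm : Summable (fun n => ‖lanA n * y ^ n‖) := by
    refine hs.congr (fun n => ?_)
    rw [Real.norm_of_nonneg (mul_nonneg (lanA_pos n).le (pow_nonneg h0 n))]
  have hsq : S * S = (1 - y)⁻¹ := by
    rw [hS, tsum_mul_tsum_eq_tsum_sum_range_of_summable_norm hnorm hnorm]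
    have : ∀ n : ℕ, ∑ k ∈ range (n+1), (lanA k * y ^ k) * (lanA (n-k) * y ^ (n-k)) = y ^ n := by
      intro n
      have : ∀ k ∈ range (n+1), (lanA k * y ^ k) * (lanA (n-k) * y ^ (n-k))
          = (lanA k * lanA (n-k)) * y ^ n := by
        intro k hk
        have hk' : k ≤ n := by simpa [Nat.lt_succ_iff] using hk
        have : y ^ k * y ^ (n-k) = y ^ n := by
          rw [← pow_add]; congr 1; omega
        calc (lanA k * y ^ k) * (lanA (n-k) * y ^ (n-k))
            = (lanA k * lanA (n-k)) * (y ^ k * y ^ (n-k)) := by ring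
          _ = (lanA k * lanA (n-k)) * y ^ n := by rw [this]
      rw [Finset.sum_congr rfl this, ← Finset.sum_mul, lanA_conv, one_mul]
    rw [tsum_congr this, tsum_geometric_of_lt_one h0 h1]
  have hSnn : 0 ≤ S := tsum_nonneg (fun n => mul_nonneg (lanA_pos n).le (pow_nonneg h0 n))
  have h1y : (0:ℝ) < 1 - y := by linarith
  have : S = Real.sqrt ((1-y)⁻¹) := by
    rw [← Real.sqrt_sq hSnn, sq, hsq]
  rw [this, Real.sqrt_inv, one_div]

lemma wallis_even (n : ℕ) : ∫ θ in (0:ℝ)..(π/2), Real.sin θ ^ (2*n) = (π/2) * lanA n := by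
  induction n with
  | zero => simp [lanA_zero]
  | succ n ih =>
    have h2 : 2*(n+1) = 2*n + 2 := by ring
    rw [h2, integral_sin_pow (2*n)]
    rw [Real.sin_zero, Real.cos_pi_div_two, ih, lanA_succ]
    have hz : (0:ℝ) ^ (2*n+1) = 0 := zero_pow (by omega)
    rw [hz]
    have : ((2*n : ℕ) : ℝ) = 2 * (n:ℝ) := by push_cast; ring
    rw [this]
    have h1 : (n:ℝ) + 1 ≠ 0 := by positivity
    have h3 : 2*(n:ℝ) + 2 ≠ 0 := by positivity
    field_simp
    ring

noncomputable def Kint (x : ℝ) : ℝ :=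
  ∫ θ in (0:ℝ)..(π/2), 1 / Real.sqrt (1 - x^2 * Real.sin θ^2)

lemma Kint_series {x : ℝ} (h0 : 0 ≤ x) (h1 : x < 1) :
    Kint x = ∑' n : ℕ, (π/2) * (lanA n^2 * x^(2*n)) := by
  have hpi : (0:ℝ) ≤ π/2 := by positivity
  have hsin2 : ∀ θ : ℝ, Real.sin θ ^ 2 ≤ 1 := by
    intro θ
    rw [← Real.sin_sq_add_cos_sq θ]
    nlinarith [sq_nonneg (Real.cos θ)]
  have hylt : ∀ θ : ℝ, x^2 * Real.sin θ^2 < 1 := by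
    intro θ
    have hx2 : x^2 < 1 := by nlinarith
    have : x^2 * Real.sin θ^2 ≤ x^2 * 1 :=
      mul_le_mul_of_nonneg_left (hsin2 θ) (by positivity)
    nlinarith
  have hptwise : ∀ θ : ℝ,
      1 / Real.sqrt (1 - x^2 * Real.sin θ^2)
        = ∑' n : ℕ, lanA n * x^(2*n) * Real.sin θ^(2*n) := by
    intro θ
    have h := (lanA_hasSum (y := x^2 * Real.sin θ^2) (by positivity) (hylt θ)).tsum_eq
    rw [← h]
    apply tsum_congr
    intro n
    rw [mul_pow, ← pow_mul, ← pow_mul]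
    ring
  -- the terms as functions
  set F : ℕ → ℝ → ℝ := fun n θ => lanA n * x^(2*n) * Real.sin θ^(2*n) with hF
  have hFcont : ∀ n, Continuous (F n) := by
    intro n; fun_prop
  have hFint : ∀ n, IntervalIntegrable (F n) MeasureTheory.volume 0 (π/2) :=
    fun n => (hFcont n).intervalIntegrable _ _
  have hFval : ∀ n, ∫ θ in (0:ℝ)..(π/2), F n θ = (π/2) * (lanA n^2 * x^(2*n)) := by
    intro n
    rw [hF]
    simp only
    rw [intervalIntegral.integral_const_mul, wallis_even n]
    ring
  have hFnonneg : ∀ n θ, 0 ≤ F n θ := by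
    intro n θ
    have := lanA_pos n
    have h1' : (0:ℝ) ≤ x^(2*n) := by positivity
    have h2' : (0:ℝ) ≤ Real.sin θ^(2*n) := by
      rw [pow_mul]; positivity
    positivity
  -- move to set integrals
  have hFIoc : ∀ n, MeasureTheory.IntegrableOn (F n) (Set.Ioc (0:ℝ) (π/2)) := by
    intro n
    exact ((hFint n).1)
  have hnormint : ∀ n, ∫ θ in Set.Ioc (0:ℝ) (π/2), ‖F n θ‖ = (π/2) * (lanA n^2 * x^(2*n)) := by
    intro n
    have : ∀ θ, ‖F n θ‖ = F n θ := fun θ => Real.norm_of_nonneg (hFnonneg n θ)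
    simp_rw [this]
    rw [← intervalIntegral.integral_of_le hpi, hFval n]
  have hsum : Summable (fun n => ∫ θ in Set.Ioc (0:ℝ) (π/2), ‖F n θ‖) := by
    simp_rw [hnormint]
    apply Summable.of_nonneg_of_le (fun n => ?_) (fun n => ?_)
      (((summable_geometric_of_lt_one (by positivity : (0:ℝ) ≤ x^2)
        (by nlinarith : x^2 < 1))).mul_left (π/2))
    · have := lanA_pos n
      have h1' : (0:ℝ) ≤ x^(2*n) := by positivity
      positivity
    · have h1' : lanA n^2 ≤ 1 := by
        have h2' := lanA_pos n
        nlinarith [lanA_le_one n]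
      have h3' : (0:ℝ) ≤ x^(2*n) := by positivity
      have : lanA n^2 * x^(2*n) ≤ (x^2)^n := by
        rw [← pow_mul]
        nlinarith
      have hpi2 : (0:ℝ) < π/2 := by positivity
      calc (π/2) * (lanA n^2 * x^(2*n)) ≤ (π/2) * (x^2)^n := by nlinarith
        _ = _ := by ring
  have key : ∑' n : ℕ, ∫ θ in Set.Ioc (0:ℝ) (π/2), F n θ
      = ∫ θ in Set.Ioc (0:ℝ) (π/2), (∑' n : ℕ, F n θ) :=
    MeasureTheory.integral_tsum_of_summable_integral_norm hFIoc hsum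
  have hval : ∀ n, ∫ θ in Set.Ioc (0:ℝ) (π/2), F n θ = (π/2) * (lanA n^2 * x^(2*n)) := by
    intro n
    rw [← intervalIntegral.integral_of_le hpi, hFval n]
  calc Kint x = ∫ θ in Set.Ioc (0:ℝ) (π/2), 1 / Real.sqrt (1 - x^2 * Real.sin θ^2) := by
        rw [Kint, intervalIntegral.integral_of_le hpi]
    _ = ∫ θ in Set.Ioc (0:ℝ) (π/2), (∑' n : ℕ, F n θ) := by
        apply MeasureTheory.integral_congr_ae
        filter_upwards with θ
        rw [hptwise θ]
    _ = ∑' n : ℕ, ∫ θ in Set.Ioc (0:ℝ) (π/2), F n θ := key.symm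
    _ = ∑' n : ℕ, (π/2) * (lanA n^2 * x^(2*n)) := tsum_congr hval

set_option maxHeartbeats 1000000 in
lemma Kint_landen {r : ℝ} (hr0 : 0 < r) (hr1 : r < 1) :
    Kint (2 * Real.sqrt r / (1+r)) = (1+r) * Kint r := by
  have h1r : (0:ℝ) < 1 + r := by linarith
  have hsq : Real.sqrt r ^ 2 = r := Real.sq_sqrt hr0.le
  have hsl : Real.sqrt r < 1 := by
    have := Real.sqrt_lt_sqrt hr0.le hr1
    simpa using this
  have hs0 : 0 < Real.sqrt r := Real.sqrt_pos.mpr hr0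
  set x := 2 * Real.sqrt r / (1+r) with hxdef
  have hx2 : x^2 = 4*r/(1+r)^2 := by
    rw [hxdef, div_pow, mul_pow, hsq]; norm_num
  have hx0 : 0 < x := by positivity
  have hx1 : x < 1 := by
    rw [hxdef, div_lt_one h1r]
    nlinarith [mul_pos (sub_pos.mpr hsl) (sub_pos.mpr hsl)]
  -- basic positivity facts
  have hden : ∀ φ : ℝ, 0 < 1 + r * Real.sin φ^2 := by
    intro φ; nlinarith [sq_nonneg (Real.sin φ)]
  have hsin_le : ∀ φ : ℝ, Real.sin φ^2 ≤ 1 := by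
    intro φ; nlinarith [Real.sin_sq_add_cos_sq φ, sq_nonneg (Real.cos φ)]
  have hden2 : ∀ φ : ℝ, 0 < 1 - r^2 * Real.sin φ^2 := by
    intro φ; nlinarith [hsin_le φ, sq_nonneg r]
  have hden3 : ∀ φ : ℝ, 0 < 1 - r * Real.sin φ^2 := by
    intro φ; nlinarith [hsin_le φ]
  have hgden : ∀ θ : ℝ, 0 < 1 - x^2 * Real.sin θ^2 := by
    intro θ; nlinarith [hsin_le θ]
  -- the functions
  set u : ℝ → ℝ := fun φ => (1+r) * Real.sin φ / (1 + r * Real.sin φ^2) with hu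
  set f : ℝ → ℝ := fun φ => Real.arcsin (u φ) with hf
  set f' : ℝ → ℝ := fun φ =>
    (1+r) * (1 - r * Real.sin φ^2) /
      ((1 + r * Real.sin φ^2) * Real.sqrt (1 - r^2 * Real.sin φ^2)) with hf'
  set g : ℝ → ℝ := fun θ => 1 / Real.sqrt (1 - x^2 * Real.sin θ^2) with hg
  -- continuity
  have hucont : Continuous u := by
    apply Continuous.div (by fun_prop) (by fun_prop)
    exact fun φ => (hden φ).ne'
  have hfcont : Continuous f := Real.continuous_arcsin.comp hucont
  have hf'cont : Continuous f' := by
    apply Continuous.div (by fun_prop)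
    · exact (by fun_prop : Continuous fun φ => 1 + r * Real.sin φ^2).mul
        (Real.continuous_sqrt.comp (by fun_prop))
    · intro φ
      exact (mul_pos (hden φ) (Real.sqrt_pos.mpr (hden2 φ))).ne'
  have hgcont : Continuous g := by
    apply Continuous.div continuous_const (Real.continuous_sqrt.comp (by fun_prop))
    intro θ
    exact (Real.sqrt_pos.mpr (hgden θ)).ne'
  -- u bounds on [0, 1] of sin
  have hub : ∀ φ : ℝ, 0 ≤ Real.sin φ → u φ ≤ 1 := by
    intro φ hsφ
    rw [hu]
    simp only
    rw [div_le_one (hden φ)]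
    nlinarith [hsin_le φ, mul_nonneg hr0.le hsφ, Real.sin_le_one φ,
      mul_nonneg (mul_nonneg hr0.le hsφ) hsφ,
      mul_nonneg (sub_nonneg.mpr (Real.sin_le_one φ))
        (sub_nonneg.mpr (by nlinarith [Real.sin_le_one φ] : r * Real.sin φ ≤ 1))]
  have hub0 : ∀ φ : ℝ, 0 ≤ Real.sin φ → 0 ≤ u φ := by
    intro φ hsφ
    rw [hu]
    exact div_nonneg (by positivity) (hden φ).le
  -- derivative on the interior
  have hderiv : ∀ φ ∈ Set.Ioo (0:ℝ) (π/2), HasDerivAt f (f' φ) φ := by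
    intro φ hφ
    have hcos : 0 < Real.cos φ :=
      Real.cos_pos_of_mem_Ioo ⟨by linarith [hφ.1, Real.pi_pos], hφ.2⟩
    have hsφ : 0 < Real.sin φ := Real.sin_pos_of_pos_of_lt_pi hφ.1
      (by linarith [hφ.2, Real.pi_pos])
    have hs1 : Real.sin φ < 1 := by
      nlinarith [Real.sin_sq_add_cos_sq φ]
    -- derivative of u
    have hd_sin : HasDerivAt Real.sin (Real.cos φ) φ := Real.hasDerivAt_sin φ
    have hd_num : HasDerivAt (fun φ => (1+r) * Real.sin φ) ((1+r) * Real.cos φ) φ :=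
      hd_sin.const_mul (1+r)
    have hd_sq : HasDerivAt (fun φ => Real.sin φ^2) (2 * Real.sin φ * Real.cos φ) φ := by
      have := hd_sin.pow 2
      simp at this
      exact this
    have hd_den : HasDerivAt (fun φ => 1 + r * Real.sin φ^2)
        (r * (2 * Real.sin φ * Real.cos φ)) φ := by
      exact ((hd_sq.const_mul r).const_add 1)
    have hd_u : HasDerivAt u
        (((1+r) * Real.cos φ * (1 + r * Real.sin φ^2)
          - (1+r) * Real.sin φ * (r * (2 * Real.sin φ * Real.cos φ)))
            / (1 + r * Real.sin φ^2)^2) φ :=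
      hd_num.div hd_den (hden φ).ne'
    have hU1 : u φ < 1 := by
      rw [hu]
      simp only
      rw [div_lt_one (hden φ)]
      nlinarith [mul_pos (sub_pos.mpr hs1)
        (sub_pos.mpr (by nlinarith : r * Real.sin φ < 1))]
    have hU0 : 0 ≤ u φ := hub0 φ hsφ.le
    have harc : HasDerivAt Real.arcsin (1 / Real.sqrt (1 - u φ^2)) (u φ) :=
      Real.hasDerivAt_arcsin (by linarith : u φ ≠ -1) hU1.ne
    have hcomp := harc.comp φ hd_u
    convert hcomp using 1
    · rfl
    · rfl
    · rfl
    -- now show f' φ equals the composed derivative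
    have hcs : Real.cos φ^2 = 1 - Real.sin φ^2 := by
      nlinarith [Real.sin_sq_add_cos_sq φ]
    have e1 : 1 - u φ^2
        = ((1 - Real.sin φ^2) * (1 - r^2 * Real.sin φ^2)) / (1 + r * Real.sin φ^2)^2 := by
      rw [hu]
      simp only
      field_simp
      ring
    have e2 : Real.sqrt (1 - u φ^2)
        = Real.cos φ * Real.sqrt (1 - r^2 * Real.sin φ^2) / (1 + r * Real.sin φ^2) := by
      rw [e1, ← hcs]
      rw [show Real.cos φ^2 * (1 - r^2 * Real.sin φ^2) / (1 + r * Real.sin φ^2)^2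
            = (Real.cos φ * Real.sqrt (1 - r^2 * Real.sin φ^2) / (1 + r * Real.sin φ^2))^2 by
        rw [div_pow, mul_pow, Real.sq_sqrt (hden2 φ).le]]
      exact Real.sqrt_sq (by positivity)
    rw [hf']
    simp only
    rw [e2]
    have hsx : 0 < Real.sqrt (1 - r^2 * Real.sin φ^2) := Real.sqrt_pos.mpr (hden2 φ)
    field_simp
    ring
  -- endpoints
  have hf0 : f 0 = 0 := by
    rw [hf, hu]
    simp
  have hfpi : f (π/2) = π/2 := by
    rw [hf, hu]
    simp only [Real.sin_pi_div_two, one_pow, mul_one]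
    rw [div_self h1r.ne', Real.arcsin_one]
  -- the substitution
  have hpi2 : (0:ℝ) < π/2 := by positivity
  have hsubst : (∫ φ in (0:ℝ)..(π/2), (g ∘ f) φ * f' φ) = ∫ θ in (f 0)..(f (π/2)), g θ := by
    apply intervalIntegral.integral_comp_mul_deriv'' hfcont.continuousOn
    · intro φ hφ
      rw [min_eq_left hpi2.le, max_eq_right hpi2.le] at hφ
      exact (hderiv φ hφ).hasDerivWithinAt
    · exact hf'cont.continuousOn
    · exact hgcont.continuousOn
  rw [hf0, hfpi] at hsubst
  -- pointwise identity of the integrand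
  have hptw : ∀ φ ∈ Set.uIcc (0:ℝ) (π/2),
      (g ∘ f) φ * f' φ = (1+r) * (1 / Real.sqrt (1 - r^2 * Real.sin φ^2)) := by
    intro φ hφ
    rw [Set.uIcc_of_le hpi2.le] at hφ
    have hsφ : 0 ≤ Real.sin φ :=
      Real.sin_nonneg_of_nonneg_of_le_pi hφ.1 (by linarith [hφ.2, Real.pi_pos])
    have hU0 : 0 ≤ u φ := hub0 φ hsφ
    have hU1 : u φ ≤ 1 := hub φ hsφ
    have hgf : g (f φ) = (1 + r * Real.sin φ^2) / (1 - r * Real.sin φ^2) := by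
      rw [hg, hf]
      simp only
      rw [Real.sin_arcsin (by linarith) hU1]
      have e3gen : ∀ z : ℝ, 0 < 1 + r*z^2 →
          1 - (4*r/(1+r)^2) * ((1+r)*z/(1+r*z^2))^2 = ((1 - r*z^2)/(1+r*z^2))^2 := by
        intro z hz
        field_simp
        ring
      have e3 : 1 - x^2 * u φ^2
          = ((1 - r * Real.sin φ^2) / (1 + r * Real.sin φ^2))^2 := by
        rw [hx2, hu]
        exact e3gen (Real.sin φ) (hden φ)
      rw [e3, Real.sqrt_sq (div_nonneg (hden3 φ).le (hden φ).le)]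
      rw [one_div, inv_div]
    show g (f φ) * f' φ = _
    rw [hgf, hf']
    simp only
    have hsx : 0 < Real.sqrt (1 - r^2 * Real.sin φ^2) := Real.sqrt_pos.mpr (hden2 φ)
    field_simp [(hden3 φ).ne', (hden φ).ne']
  have : (∫ φ in (0:ℝ)..(π/2), (g ∘ f) φ * f' φ)
      = ∫ φ in (0:ℝ)..(π/2), (1+r) * (1 / Real.sqrt (1 - r^2 * Real.sin φ^2)) :=
    intervalIntegral.integral_congr hptw
  rw [this] at hsubst
  rw [intervalIntegral.integral_const_mul] at hsubst
  have hKr : Kint r = ∫ φ in (0:ℝ)..(π/2), 1 / Real.sqrt (1 - r^2 * Real.sin φ^2) := by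
    rw [Kint]
  have hKx : Kint x = ∫ θ in (0:ℝ)..(π/2), g θ := by
    rw [Kint, hg]
  rw [hKx, hKr, ← hsubst]

lemma lanK_pos (n : ℕ) : 0 < lanK n := by
  have := lanA_pos n; rw [lanK]; positivity

lemma lanK_le_one (n : ℕ) : lanK n ≤ 1 := by
  have h1 := lanA_pos n; have h2 := lanA_le_one n
  rw [lanK]; nlinarith

lemma lanK_succ (n : ℕ) : lanK (n+1) = lanK n * ((n:ℝ) + 1/2)^2 / ((n:ℝ)+1)^2 := by
  rw [lanK, lanK, lanA_succ, div_pow, mul_pow]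

lemma lanK_identity {r : ℝ} (hr0 : 0 < r) (hr1 : r < 1) :
    ∑' n : ℕ, lanK n * ((2 * Real.sqrt r / (1+r))^2)^n
      = (1+r) * ∑' n : ℕ, lanK n * (r^2)^n := by
  have h1r : (0:ℝ) < 1 + r := by linarith
  have hsl : Real.sqrt r < 1 := by
    have := Real.sqrt_lt_sqrt hr0.le hr1
    simpa using this
  have hs0 : 0 < Real.sqrt r := Real.sqrt_pos.mpr hr0
  set x := 2 * Real.sqrt r / (1+r) with hxdef
  have hx0 : 0 ≤ x := by positivity
  have hx1 : x < 1 := by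
    rw [hxdef, div_lt_one h1r]
    nlinarith [mul_pos (sub_pos.mpr hsl) (sub_pos.mpr hsl), Real.mul_self_sqrt hr0.le]
  have e1 : Kint x = ∑' n : ℕ, (π/2) * (lanK n * (x^2)^n) := by
    rw [Kint_series hx0 hx1]
    exact tsum_congr fun n => by rw [lanK, pow_mul]
  have e2 : Kint r = ∑' n : ℕ, (π/2) * (lanK n * (r^2)^n) := by
    rw [Kint_series hr0.le hr1]
    exact tsum_congr fun n => by rw [lanK, pow_mul]
  have e3 := Kint_landen hr0 hr1
  rw [← hxdef, e1, e2] at e3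
  rw [tsum_mul_left, tsum_mul_left] at e3
  have hpi : (π/2 : ℝ) ≠ 0 := by positivity
  have := e3
  rw [mul_comm (1+r) (π/2 * _), mul_assoc] at this
  · exact mul_left_cancel₀ hpi (by linarith [this])


theorem landen_inequality (a b : ℝ) (ha : a ∈ Set.Ioo (0:ℝ) 1)
    (hb : b ∈ Set.Ioo (0:ℝ) 1) (hab : a + b ≤ 1) (r : ℝ) (hr : r ∈ Set.Ioo (0:ℝ) 1) :
    GaussF a b (a+b) ((2 * Real.sqrt r / (1 + r))^2) ≤
      (1 + r) * GaussF a b (a+b) (r^2) := by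
  obtain ⟨ha0, ha1⟩ := ha
  obtain ⟨hb0, hb1⟩ := hb
  obtain ⟨hr0, hr1⟩ := hr
  set c : ℕ → ℝ := fun n => (ascPochhammer ℝ n).eval a * (ascPochhammer ℝ n).eval b /
    ((ascPochhammer ℝ n).eval (a+b) * n.factorial) with hc
  -- basic facts about c
  have hcpos : ∀ n, 0 < c n := by
    intro n
    rw [hc]
    have h1 := ascPochhammer_pos n a ha0
    have h2 := ascPochhammer_pos n b hb0
    have h3 := ascPochhammer_pos n (a+b) (by linarith)
    have h4 : (0:ℝ) < n.factorial := by positivity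
    positivity
  have hcsucc : ∀ n : ℕ, c (n+1) = c n * ((a+n)*(b+n)) / ((a+b+n)*((n:ℝ)+1)) := by
    intro n
    rw [hc]
    simp only
    rw [ascPochhammer_succ_eval, ascPochhammer_succ_eval, ascPochhammer_succ_eval]
    have h3 := ascPochhammer_pos n (a+b) (by linarith)
    have h4 : (0:ℝ) < (n.factorial : ℝ) := by positivity
    have h5 : ((n+1).factorial : ℝ) = (n.factorial : ℝ) * ((n:ℝ)+1) := by
      push_cast [Nat.factorial_succ]; ring
    rw [h5]
    have h6 : a + b + (n:ℝ) > 0 := by positivity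
    have h7 : (n:ℝ) + 1 > 0 := by positivity
    field_simp
  have hcle1 : ∀ n, c n ≤ 1 := by
    intro n
    induction n with
    | zero => rw [hc]; simp
    | succ n ih =>
      rw [hcsucc n]
      have h1 : (a+n)*(b+n) ≤ (a+b+n)*((n:ℝ)+1) := by nlinarith [Nat.cast_nonneg (α := ℝ) n]
      have h2 : (0:ℝ) < (a+b+n)*((n:ℝ)+1) := by positivity
      rw [div_le_one h2]
      calc c n * ((a+n)*(b+n)) ≤ 1 * ((a+b+n)*((n:ℝ)+1)) := by
            apply mul_le_mul ih h1 (by positivity) (by norm_num)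
        _ = _ := one_mul _
  -- the key coefficient comparison
  have hkey : ∀ n : ℕ, (a+n)*(b+n)*((n:ℝ)+1) ≤ (a+b+n)*((n:ℝ)+1/2)^2 := by
    intro n
    have h4ab : 4*(a*b) ≤ (a+b)^2 := by nlinarith [sq_nonneg (a-b)]
    have hs1 : a + b ≤ 1 := hab
    have hn : (0:ℝ) ≤ n := Nat.cast_nonneg n
    nlinarith [mul_nonneg hn (by nlinarith : (0:ℝ) ≤ 1 - 4*(a*b)),
      (by nlinarith : 4*(a*b) ≤ a+b)]
  -- single-step antitonicity of c/lanK
  have hanti : ∀ n : ℕ, c (n+1) * lanK n ≤ c n * lanK (n+1) := by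
    intro n
    rw [hcsucc n, lanK_succ n]
    have h6 : (0:ℝ) < a + b + n := by positivity
    have h7 : (0:ℝ) < (n:ℝ) + 1 := by positivity
    have hK := lanK_pos n
    have hC := hcpos n
    have lhs_eq : c n * ((a+↑n)*(b+↑n)) / ((a+b+↑n)*((n:ℝ)+1)) * lanK n
        = (c n * ((a+↑n)*(b+↑n)) * lanK n) / ((a+b+↑n)*((n:ℝ)+1)) := by ring
    have rhs_eq : c n * (lanK n * (((n:ℝ)+1/2)^2) / (((n:ℝ)+1)^2))
        = (c n * lanK n * (((n:ℝ)+1/2)^2)) / (((n:ℝ)+1)^2) := by ring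
    rw [lhs_eq, rhs_eq, div_le_div_iff₀ (by positivity) (by positivity)]
    nlinarith [mul_le_mul_of_nonneg_left (hkey n)
      (by positivity : (0:ℝ) ≤ c n * lanK n * ((n:ℝ)+1))]
  -- full antitonicity
  have hmono : ∀ m n : ℕ, m ≤ n → c n * lanK m ≤ c m * lanK n := by
    intro m n hmn
    induction n, hmn using Nat.le_induction with
    | base => exact le_refl _
    | succ n hmn ih =>
      have h1 : c (n+1) * lanK m * lanK n ≤ c m * lanK (n+1) * lanK n := by
        calc c (n+1) * lanK m * lanK n = (c (n+1) * lanK n) * lanK m := by ring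
          _ ≤ (c n * lanK (n+1)) * lanK m :=
              mul_le_mul_of_nonneg_right (hanti n) (lanK_pos m).le
          _ = (c n * lanK m) * lanK (n+1) := by ring
          _ ≤ (c m * lanK n) * lanK (n+1) :=
              mul_le_mul_of_nonneg_right ih (lanK_pos (n+1)).le
          _ = c m * lanK (n+1) * lanK n := by ring
      exact le_of_mul_le_mul_right h1 (lanK_pos n)
  -- setup of the two arguments
  have h1r : (0:ℝ) < 1 + r := by linarith
  have hsl : Real.sqrt r < 1 := by
    have := Real.sqrt_lt_sqrt hr0.le hr1
    simpa using this
  have hs0 : 0 < Real.sqrt r := Real.sqrt_pos.mpr hr0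
  set t : ℝ := (2 * Real.sqrt r / (1 + r))^2 with htdef
  set x2 : ℝ := r^2 with hx2def
  have ht0 : 0 ≤ t := sq_nonneg _
  have ht1 : t < 1 := by
    rw [htdef]
    have hlt : 2 * Real.sqrt r / (1 + r) < 1 := by
      rw [div_lt_one h1r]
      nlinarith [mul_pos (sub_pos.mpr hsl) (sub_pos.mpr hsl), Real.mul_self_sqrt hr0.le]
    nlinarith [div_nonneg (by positivity : (0:ℝ) ≤ 2 * Real.sqrt r) h1r.le]
  have hx20 : 0 ≤ x2 := sq_nonneg r
  have hx21 : x2 < 1 := by rw [hx2def]; nlinarith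
  have hteq : t = 4*r/(1+r)^2 := by
    rw [htdef, div_pow, mul_pow, Real.sq_sqrt hr0.le]; norm_num
  have htge : x2 ≤ t := by
    rw [hteq, hx2def, le_div_iff₀ (by positivity)]
    nlinarith
  have htratio : (1:ℝ) < t / x2 := by
    rw [lt_div_iff₀ (by positivity : (0:ℝ) < x2), one_mul, hteq, hx2def,
      lt_div_iff₀ (by positivity : (0:ℝ) < (1+r)^2)]
    nlinarith
  -- summability
  have hgeo_t : Summable (fun n : ℕ => t^n) := summable_geometric_of_lt_one ht0 ht1
  have hgeo_x : Summable (fun n : ℕ => x2^n) := summable_geometric_of_lt_one hx20 hx21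
  have hsum_ct : Summable (fun n => c n * t^n) := by
    apply Summable.of_nonneg_of_le
      (fun n => mul_nonneg (hcpos n).le (pow_nonneg ht0 n)) (fun n => ?_) hgeo_t
    calc c n * t^n ≤ 1 * t^n :=
          mul_le_mul_of_nonneg_right (hcle1 n) (pow_nonneg ht0 n)
      _ = t^n := one_mul _
  have hsum_cx : Summable (fun n => c n * x2^n) := by
    apply Summable.of_nonneg_of_le
      (fun n => mul_nonneg (hcpos n).le (pow_nonneg hx20 n)) (fun n => ?_) hgeo_x
    calc c n * x2^n ≤ 1 * x2^n :=
          mul_le_mul_of_nonneg_right (hcle1 n) (pow_nonneg hx20 n)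
      _ = x2^n := one_mul _
  have hsum_kt : Summable (fun n => lanK n * t^n) := by
    apply Summable.of_nonneg_of_le
      (fun n => mul_nonneg (lanK_pos n).le (pow_nonneg ht0 n)) (fun n => ?_) hgeo_t
    calc lanK n * t^n ≤ 1 * t^n :=
          mul_le_mul_of_nonneg_right (lanK_le_one n) (pow_nonneg ht0 n)
      _ = t^n := one_mul _
  have hsum_kx : Summable (fun n => lanK n * x2^n) := by
    apply Summable.of_nonneg_of_le
      (fun n => mul_nonneg (lanK_pos n).le (pow_nonneg hx20 n)) (fun n => ?_) hgeo_x
    calc lanK n * x2^n ≤ 1 * x2^n :=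
          mul_le_mul_of_nonneg_right (lanK_le_one n) (pow_nonneg hx20 n)
      _ = x2^n := one_mul _
  -- the pivot index
  classical
  have hexists : ∃ N : ℕ, (1+r) * x2^N ≤ t^N := by
    obtain ⟨N, hN⟩ := pow_unbounded_of_one_lt (1+r) htratio
    refine ⟨N, ?_⟩
    rw [div_pow] at hN
    have hx2N : 0 < x2^N := pow_pos (by positivity) N
    rw [lt_div_iff₀ hx2N] at hN
    linarith
  set N₀ := Nat.find hexists with hN₀def
  have hPN₀ : (1+r) * x2^N₀ ≤ t^N₀ := Nat.find_spec hexists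
  have hPmono : ∀ n, (1+r) * x2^n ≤ t^n → (1+r) * x2^(n+1) ≤ t^(n+1) := by
    intro n hPn
    have h1 : (1+r) * x2^(n+1) = x2 * ((1+r) * x2^n) := by ring
    have h2 : x2 * ((1+r) * x2^n) ≤ x2 * t^n := mul_le_mul_of_nonneg_left hPn hx20
    have h3 : x2 * t^n ≤ t * t^n := mul_le_mul_of_nonneg_right htge (pow_nonneg ht0 n)
    calc (1+r) * x2^(n+1) = x2 * ((1+r) * x2^n) := h1
      _ ≤ x2 * t^n := h2
      _ ≤ t * t^n := h3
      _ = t^(n+1) := by ring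
  have hPall : ∀ n, N₀ ≤ n → (1+r) * x2^n ≤ t^n := by
    intro n hn
    induction n, hn using Nat.le_induction with
    | base => exact hPN₀
    | succ n hn ih => exact hPmono n ih
  set ρ : ℝ := c N₀ / lanK N₀ with hρdef
  have hρpos : 0 < ρ := div_pos (hcpos N₀) (lanK_pos N₀)
  -- termwise comparison
  have hterm : ∀ n : ℕ, c n * t^n - (1+r) * (c n * x2^n)
      ≤ ρ * (lanK n * t^n - (1+r) * (lanK n * x2^n)) := by
    intro n
    by_cases hPn : (1+r) * x2^n ≤ t^n
    · have hle : N₀ ≤ n := Nat.find_min' hexists hPn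
      have hcn : c n ≤ ρ * lanK n := by
        rw [hρdef, div_mul_eq_mul_div, le_div_iff₀ (lanK_pos N₀)]
        exact hmono N₀ n hle
      have hd : 0 ≤ t^n - (1+r) * x2^n := by linarith
      calc c n * t^n - (1+r) * (c n * x2^n) = c n * (t^n - (1+r) * x2^n) := by ring
        _ ≤ (ρ * lanK n) * (t^n - (1+r) * x2^n) := mul_le_mul_of_nonneg_right hcn hd
        _ = ρ * (lanK n * t^n - (1+r) * (lanK n * x2^n)) := by ring
    · have hlt : n < N₀ := by
        by_contra hcon
        exact hPn (hPall n (le_of_not_gt hcon))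
      have hcn : ρ * lanK n ≤ c n := by
        rw [hρdef, div_mul_eq_mul_div, div_le_iff₀ (lanK_pos N₀)]
        exact hmono n N₀ hlt.le
      have hd : t^n - (1+r) * x2^n ≤ 0 := by
        push_neg at hPn
        linarith
      calc c n * t^n - (1+r) * (c n * x2^n) = c n * (t^n - (1+r) * x2^n) := by ring
        _ ≤ (ρ * lanK n) * (t^n - (1+r) * x2^n) := mul_le_mul_of_nonpos_right hcn hd
        _ = ρ * (lanK n * t^n - (1+r) * (lanK n * x2^n)) := by ring
  -- summary of the tsum comparison
  have hsumL : Summable (fun n => c n * t^n - (1+r) * (c n * x2^n)) :=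
    hsum_ct.sub (hsum_cx.mul_left (1+r))
  have hsumR : Summable (fun n => ρ * (lanK n * t^n - (1+r) * (lanK n * x2^n))) :=
    (hsum_kt.sub (hsum_kx.mul_left (1+r))).mul_left ρ
  have htsum_le := Summable.tsum_le_tsum hterm hsumL hsumR
  rw [Summable.tsum_sub hsum_ct (hsum_cx.mul_left (1+r)), tsum_mul_left] at htsum_le
  rw [tsum_mul_left, Summable.tsum_sub hsum_kt (hsum_kx.mul_left (1+r)), tsum_mul_left] at htsum_le
  have hid : ∑' n, lanK n * t^n = (1+r) * ∑' n, lanK n * x2^n := by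
    rw [htdef, hx2def]
    exact lanK_identity hr0 hr1
  rw [hid] at htsum_le
  simp only [sub_self, mul_zero] at htsum_le
  -- unfold GaussF
  have hG1 : GaussF a b (a+b) t = ∑' n, c n * t^n := rfl
  have hG2 : GaussF a b (a+b) x2 = ∑' n, c n * x2^n := rfl
  rw [hG1, hG2]
  linarith
end
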